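/- Let q > 0, let θ_1 ≥ θ_2 ≥ ... ≥ θ_K be nonincreasing real numbers, and let E: [0,1] → ℝ be convex with E(0) = 0. Define a(f) = q · Σ_{k=1}^K θ_k [E(Q_k/q) − E(Q_{k−1}/q)] on the simplex {f ∈ ℝ^K : f_i ≥ 0, Σ f_i = q}, where Q_k = Σ_{j≤k} f_j, Q_0 = 0. Then a is a convex function of f. -/

import Mathlib

/-- Abel summation identity. -/
lemma abel_sum_aux (a b : ℕ → ℝ) (m : ℕ) :
    ∑ k ∈ Finset.range (m + 1), a k * (b (k + 1) - b k)
      = ∑ k ∈ Finset.range m, (a k - a (k + 1)) * b (k + 1)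
        + a m * b (m + 1) - a 0 * b 0 := by
  induction m with
  | zero => simp; ring
  | succ n ih =>
      rw [Finset.sum_range_succ, ih, Finset.sum_range_succ]
      ring

/-- Sum of convex functions is convex. -/
lemma convexOn_range_sum {S : Set (ℕ → ℝ)} (hS : Convex ℝ S) (m : ℕ)
    (g : ℕ → (ℕ → ℝ) → ℝ) (hg : ∀ k < m, ConvexOn ℝ S (g k)) :
    ConvexOn ℝ S (fun f => ∑ k ∈ Finset.range m, g k f) := by
  induction m with
  | zero => simpa using convexOn_const (0 : ℝ) hS
  | succ n ih =>
      have h1 : ConvexOn ℝ S (fun f => ∑ k ∈ Finset.range n, g k f) :=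
        ih (fun k hk => hg k (hk.trans (Nat.lt_succ_self n)))
      have h2 := h1.add (hg n (Nat.lt_succ_self n))
      simpa [Finset.sum_range_succ, Pi.add_def] using h2

/-- The electricity-cost term a(f) = q·Σ_k θ_k [E(Q_k/q) − E(Q_{k−1}/q)], with Q_k the
cumulative flows, nonincreasing prices θ and convex E with E(0) = 0, is convex on the
flow simplex {f ≥ 0, Σ f = q}. (Paths are indexed 0,…,K−1 here.) -/
theorem stmt_6 (K : ℕ) (q : ℝ) (hq : 0 < q) (θ : ℕ → ℝ) (E : ℝ → ℝ)
    (hθ : ∀ k, k + 1 < K → θ (k + 1) ≤ θ k)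
    (hE : ConvexOn ℝ (Set.Icc 0 1) E) (hE0 : E 0 = 0) :
    ConvexOn ℝ
      {f : ℕ → ℝ | (∀ i < K, 0 ≤ f i) ∧ ∑ i ∈ Finset.range K, f i = q}
      (fun f => q * ∑ k ∈ Finset.range K,
        θ k * (E ((∑ j ∈ Finset.range (k + 1), f j) / q)
              - E ((∑ j ∈ Finset.range k, f j) / q))) := by
  set S : Set (ℕ → ℝ) :=
    {f : ℕ → ℝ | (∀ i < K, 0 ≤ f i) ∧ ∑ i ∈ Finset.range K, f i = q} with hSdef
  -- S is convex
  have hS : Convex ℝ S := by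
    intro x hx y hy a b ha hb hab
    obtain ⟨hx1, hx2⟩ := hx
    obtain ⟨hy1, hy2⟩ := hy
    constructor
    · intro i hi
      have : (a • x + b • y) i = a * x i + b * y i := by
        simp [Pi.add_apply, smul_eq_mul]
      rw [this]
      exact add_nonneg (mul_nonneg ha (hx1 i hi)) (mul_nonneg hb (hy1 i hi))
    · have : ∀ i ∈ Finset.range K, (a • x + b • y) i = a * x i + b * y i := by
        intro i _; simp [Pi.add_apply, smul_eq_mul]
      rw [Finset.sum_congr rfl this, Finset.sum_add_distrib,
        ← Finset.mul_sum, ← Finset.mul_sum, hx2, hy2]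
      linear_combination q * hab
  -- membership of partial sums in [0,1]
  have hmem : ∀ f ∈ S, ∀ k, k ≤ K →
      (∑ j ∈ Finset.range k, f j) / q ∈ Set.Icc (0 : ℝ) 1 := by
    intro f hf k hk
    obtain ⟨hf1, hf2⟩ := hf
    have h0 : 0 ≤ ∑ j ∈ Finset.range k, f j :=
      Finset.sum_nonneg fun j hj =>
        hf1 j ((Finset.mem_range.mp hj).trans_le hk)
    have h1 : ∑ j ∈ Finset.range k, f j ≤ q := by
      rw [← hf2]
      exact Finset.sum_le_sum_of_subset_of_nonneg
        (Finset.range_subset_range.mpr hk)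
        (fun j hj _ => hf1 j (Finset.mem_range.mp hj))
    constructor
    · exact div_nonneg h0 hq.le
    · exact (div_le_one hq).mpr h1
  -- convexity of each cumulative-term function
  have hconv : ∀ k, k ≤ K →
      ConvexOn ℝ S (fun f => E ((∑ j ∈ Finset.range k, f j) / q)) := by
    intro k hk
    refine ⟨hS, fun x hx y hy a b ha hb hab => ?_⟩
    have hxy : (∑ j ∈ Finset.range k, (a • x + b • y) j) / q
        = a * ((∑ j ∈ Finset.range k, x j) / q)
          + b * ((∑ j ∈ Finset.range k, y j) / q) := by
      have : ∀ j ∈ Finset.range k, (a • x + b • y) j = a * x j + b * y j := by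
        intro j _; simp [Pi.add_apply, smul_eq_mul]
      rw [Finset.sum_congr rfl this, Finset.sum_add_distrib,
        ← Finset.mul_sum, ← Finset.mul_sum]
      field_simp
    have h2 := hE.2 (hmem x hx k hk) (hmem y hy k hk) ha hb hab
    simp only [smul_eq_mul] at h2 ⊢
    rw [hxy]
    exact h2
  -- split on K
  rcases Nat.eq_zero_or_pos K with hK0 | hKpos
  · subst hK0
    simpa using convexOn_const (q * 0) hS
  obtain ⟨m, rfl⟩ := Nat.exists_eq_succ_of_ne_zero hKpos.ne'
  -- the convex reformulation
  have hG : ConvexOn ℝ S (fun f => q *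
      (∑ k ∈ Finset.range m, (θ k - θ (k + 1))
          * E ((∑ j ∈ Finset.range (k + 1), f j) / q)
        + θ m * E 1)) := by
    have hsum : ConvexOn ℝ S (fun f => ∑ k ∈ Finset.range m,
        (θ k - θ (k + 1)) * E ((∑ j ∈ Finset.range (k + 1), f j) / q)) := by
      apply convexOn_range_sum hS
      intro k hk
      have hnn : (0 : ℝ) ≤ θ k - θ (k + 1) :=
        sub_nonneg.mpr (hθ k (by omega))
      have := (hconv (k + 1) (by omega)).smul hnn
      simpa [smul_eq_mul] using this
    have hadd := hsum.add (convexOn_const (θ m * E 1) hS)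
    have := hadd.smul hq.le
    simpa [smul_eq_mul] using this
  -- pointwise equality on S
  refine ⟨hS, fun x hx y hy a b ha hb hab => ?_⟩
  have hxy : a • x + b • y ∈ S := hS hx hy ha hb hab
  have key : ∀ f ∈ S, (q * ∑ k ∈ Finset.range (m + 1),
      θ k * (E ((∑ j ∈ Finset.range (k + 1), f j) / q)
            - E ((∑ j ∈ Finset.range k, f j) / q)))
      = q * (∑ k ∈ Finset.range m, (θ k - θ (k + 1))
          * E ((∑ j ∈ Finset.range (k + 1), f j) / q)
        + θ m * E 1) := by
    intro f hf
    have hb0 : E ((∑ j ∈ Finset.range 0, f j) / q) = 0 := by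
      simp [hE0]
    have hbK : E ((∑ j ∈ Finset.range (m + 1), f j) / q) = E 1 := by
      rw [hf.2, div_self hq.ne']
    have := abel_sum_aux θ
      (fun k => E ((∑ j ∈ Finset.range k, f j) / q)) m
    rw [this, hb0, hbK]
    ring
  calc (fun f => q * ∑ k ∈ Finset.range (m + 1),
          θ k * (E ((∑ j ∈ Finset.range (k + 1), f j) / q)
                - E ((∑ j ∈ Finset.range k, f j) / q))) (a • x + b • y)
      = q * (∑ k ∈ Finset.range m, (θ k - θ (k + 1))
          * E ((∑ j ∈ Finset.range (k + 1), (a • x + b • y) j) / q)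
        + θ m * E 1) := key _ hxy
    _ ≤ a • (q * (∑ k ∈ Finset.range m, (θ k - θ (k + 1))
          * E ((∑ j ∈ Finset.range (k + 1), x j) / q) + θ m * E 1))
        + b • (q * (∑ k ∈ Finset.range m, (θ k - θ (k + 1))
          * E ((∑ j ∈ Finset.range (k + 1), y j) / q) + θ m * E 1)) :=
        hG.2 hx hy ha hb hab
    _ = a • (q * ∑ k ∈ Finset.range (m + 1),
          θ k * (E ((∑ j ∈ Finset.range (k + 1), x j) / q)
                - E ((∑ j ∈ Finset.range k, x j) / q)))
        + b • (q * ∑ k ∈ Finset.range (m + 1),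
          θ k * (E ((∑ j ∈ Finset.range (k + 1), y j) / q)
                - E ((∑ j ∈ Finset.range k, y j) / q))) := by
        rw [key x hx, key y hy]
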